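/- Every vertex of the degree sequence polytope D(n,m,2) = conv{∑ G : G a simple graph on [n] with exactly m edges} is the degree sequence of a threshold graph with m edges. -/

import Mathlib

/-- Degree of vertex `i` in the (hyper)graph `G`, given as a set of edges. -/
def degSeq {V : Type*} [DecidableEq V] (G : Finset (Finset V)) (i : V) : ℕ :=
  (G.filter (fun e => i ∈ e)).card

/-- A graph (set of 2-element edge sets) is threshold iff `N(i) ⊆ N[j]` whenever `dᵢ ≤ dⱼ`. -/
def IsThreshold {V : Type*} [DecidableEq V] (G : Finset (Finset V)) : Prop :=
  ∀ i j : V, degSeq G i ≤ degSeq G j →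
    ∀ x : V, ({i, x} : Finset V) ∈ G → x = j ∨ ({j, x} : Finset V) ∈ G

lemma deg_swap {V : Type*} [DecidableEq V] (G : Finset (Finset V)) (a b : Finset V)
    (hb : b ∈ G) (ha : a ∉ G) (k : V) :
    degSeq (insert a (G.erase b)) k + (if k ∈ b then 1 else 0)
      = degSeq G k + (if k ∈ a then 1 else 0) := by
  unfold degSeq
  rw [Finset.filter_insert, Finset.filter_erase]
  have hbmem : b ∈ G.filter (fun e => k ∈ e) ↔ k ∈ b := by simp [hb]
  by_cases hka : k ∈ a <;> by_cases hkb : k ∈ b <;> simp only [hka, hkb, if_true, if_false]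
  · rw [Finset.card_insert_of_notMem (by simp [ha]),
      Finset.card_erase_of_mem (hbmem.2 hkb)]
    have : 0 < (G.filter (fun e => k ∈ e)).card := Finset.card_pos.2 ⟨b, hbmem.2 hkb⟩
    omega
  · rw [Finset.card_insert_of_notMem (by simp [ha]),
      Finset.erase_eq_of_notMem (fun h => hkb (hbmem.1 h))]
  · rw [Finset.card_erase_of_mem (hbmem.2 hkb)]
    have : 0 < (G.filter (fun e => k ∈ e)).card := Finset.card_pos.2 ⟨b, hbmem.2 hkb⟩
    omega
  · rw [Finset.erase_eq_of_notMem (fun h => hkb (hbmem.1 h))]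

lemma deg_eq_card_nbrs {V : Type*} [DecidableEq V] [Fintype V] (G : Finset (Finset V))
    (h2 : ∀ e ∈ G, e.card = 2) (i : V) :
    degSeq G i = (Finset.univ.filter (fun x => ({i, x} : Finset V) ∈ G)).card := by
  unfold degSeq
  refine (Finset.card_bij (fun x _ => ({i, x} : Finset V)) ?_ ?_ ?_).symm
  · intro x hx
    simp only [Finset.mem_filter, Finset.mem_univ, true_and] at hx ⊢
    exact ⟨hx, by simp⟩
  · intro x hx y hy hxy
    simp only [Finset.mem_filter, Finset.mem_univ, true_and] at hx hy
    have hxy' : ({i, x} : Finset V) = {i, y} := hxy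
    have hxi : x ≠ i := by
      rintro rfl
      have := h2 _ hx; simp at this
    have : x ∈ ({i, y} : Finset V) := by rw [← hxy']; simp
    simp only [Finset.mem_insert, Finset.mem_singleton] at this
    tauto
  · intro e he
    simp only [Finset.mem_filter] at he
    obtain ⟨heG, hie⟩ := he
    obtain ⟨a, b, hab, rfl⟩ := Finset.card_eq_two.1 (h2 _ heG)
    simp only [Finset.mem_insert, Finset.mem_singleton] at hie
    rcases hie with rfl | rfl
    · exact ⟨b, by simpa using heG, rfl⟩
    · refine ⟨a, ?_, ?_⟩
      · simp only [Finset.mem_filter, Finset.mem_univ, true_and]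
        rwa [Finset.pair_comm]
      · exact Finset.pair_comm i a

theorem stmt_14 (n m : ℕ) (d : Fin n → ℝ)
    (hd : d ∈ Set.extremePoints ℝ (convexHull ℝ
      {v : Fin n → ℝ | ∃ G : Finset (Finset (Fin n)),
        (∀ e ∈ G, e.card = 2) ∧ G.card = m ∧ ∀ i, v i = (degSeq G i : ℝ)})) :
    ∃ G : Finset (Finset (Fin n)), (∀ e ∈ G, e.card = 2) ∧ G.card = m ∧
      IsThreshold G ∧ ∀ i, d i = (degSeq G i : ℝ) := by
  set S : Set (Fin n → ℝ) := {v : Fin n → ℝ | ∃ G : Finset (Finset (Fin n)),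
        (∀ e ∈ G, e.card = 2) ∧ G.card = m ∧ ∀ i, v i = (degSeq G i : ℝ)} with hS
  obtain ⟨G, h2, hm, hdeg⟩ := extremePoints_convexHull_subset hd
  refine ⟨G, h2, hm, ?_, hdeg⟩
  intro i j hij x hx
  by_contra hcon
  push_neg at hcon
  obtain ⟨hxj, hjx⟩ := hcon
  have hij' : i ≠ j := by rintro rfl; exact hjx hx
  have hxi : x ≠ i := by
    rintro rfl
    have := h2 _ hx; simp at this
  -- neighborhoods
  set Ni := Finset.univ.filter (fun z => ({i, z} : Finset (Fin n)) ∈ G) with hNi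
  set Nj := Finset.univ.filter (fun z => ({j, z} : Finset (Fin n)) ∈ G) with hNj
  have hmemNi : ∀ z, z ∈ Ni ↔ ({i, z} : Finset (Fin n)) ∈ G := by intro z; simp [hNi]
  have hmemNj : ∀ z, z ∈ Nj ↔ ({j, z} : Finset (Fin n)) ∈ G := by intro z; simp [hNj]
  have hcardle : (Ni.erase j).card ≤ (Nj.erase i).card := by
    have h1 : Ni.card ≤ Nj.card := by
      rw [← deg_eq_card_nbrs G h2 i, ← deg_eq_card_nbrs G h2 j]; exact hij
    by_cases hij2 : ({i, j} : Finset (Fin n)) ∈ G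
    · rw [Finset.card_erase_of_mem ((hmemNi j).2 hij2),
        Finset.card_erase_of_mem ((hmemNj i).2 (by rwa [Finset.pair_comm]))]
      omega
    · rw [Finset.erase_eq_of_notMem (fun h => hij2 ((hmemNi j).1 h)),
        Finset.erase_eq_of_notMem (fun h => hij2 (by rw [Finset.pair_comm]; exact (hmemNj i).1 h))]
      exact h1
  have hxNi : x ∈ Ni.erase j := Finset.mem_erase.2 ⟨hxj, (hmemNi x).2 hx⟩
  have hxNj : x ∉ Nj.erase i := fun h => hjx ((hmemNj x).1 (Finset.mem_of_mem_erase h))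
  obtain ⟨y, hyNj, hyNi⟩ : ∃ y ∈ Nj.erase i, y ∉ Ni.erase j := by
    by_contra hc
    push_neg at hc
    have hss : Nj.erase i ⊂ Ni.erase j := ⟨hc, fun h => hxNj (h hxNi)⟩
    exact absurd (Finset.card_lt_card hss) (not_lt.2 hcardle)
  have hyi : y ≠ i := (Finset.mem_erase.1 hyNj).1
  have hjyG : ({j, y} : Finset (Fin n)) ∈ G := (hmemNj y).1 (Finset.mem_of_mem_erase hyNj)
  have hyj : y ≠ j := by
    rintro rfl
    have := h2 _ hjyG; simp at this
  have hiyG : ({i, y} : Finset (Fin n)) ∉ G :=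
    fun h => hyNi (Finset.mem_erase.2 ⟨hyj, (hmemNi y).2 h⟩)
  have hyx : y ≠ x := by rintro rfl; exact hjx hjyG
  -- the two swapped graphs
  have e1 := deg_swap G {j, x} {i, x} hx hjx
  have e2 := deg_swap G {i, y} {j, y} hjyG hiyG
  have key : ∀ k, degSeq (insert {j, x} (G.erase {i, x})) k
      + degSeq (insert {i, y} (G.erase {j, y})) k = 2 * degSeq G k := by
    intro k
    have h1 := e1 k
    have h2 := e2 k
    simp only [Finset.mem_insert, Finset.mem_singleton] at h1 h2
    by_cases k1 : k = i <;> by_cases k2 : k = j <;> by_cases k3 : k = x <;> by_cases k4 : k = y <;>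
      subst_vars <;> simp_all <;> omega
  have hGpos : 0 < G.card := Finset.card_pos.2 ⟨_, hx⟩
  have hv1S : (fun k => (degSeq (insert {j, x} (G.erase {i, x})) k : ℝ)) ∈ S := by
    refine ⟨_, ?_, ?_, fun _ => rfl⟩
    · intro e he
      rcases Finset.mem_insert.1 he with rfl | he
      · exact Finset.card_pair (Ne.symm hxj)
      · exact h2 _ (Finset.mem_of_mem_erase he)
    · rw [Finset.card_insert_of_notMem (fun h => hjx (Finset.mem_of_mem_erase h)),
        Finset.card_erase_of_mem hx, hm]
      have : 0 < m := hm ▸ hGpos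
      omega
  have hv2S : (fun k => (degSeq (insert {i, y} (G.erase {j, y})) k : ℝ)) ∈ S := by
    refine ⟨_, ?_, ?_, fun _ => rfl⟩
    · intro e he
      rcases Finset.mem_insert.1 he with rfl | he
      · exact Finset.card_pair (Ne.symm hyi)
      · exact h2 _ (Finset.mem_of_mem_erase he)
    · rw [Finset.card_insert_of_notMem (fun h => hiyG (Finset.mem_of_mem_erase h)),
        Finset.card_erase_of_mem hjyG, hm]
      have : 0 < m := hm ▸ hGpos
      omega
  have hseg : d ∈ openSegment ℝ (fun k => (degSeq (insert {j, x} (G.erase {i, x})) k : ℝ))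
      (fun k => (degSeq (insert {i, y} (G.erase {j, y})) k : ℝ)) := by
    refine ⟨1/2, 1/2, by norm_num, by norm_num, by norm_num, ?_⟩
    funext k
    have hk := key k
    have hdk := hdeg k
    simp only [Pi.add_apply, Pi.smul_apply, smul_eq_mul]
    rw [hdk]
    have hcast : (degSeq (insert {j, x} (G.erase {i, x})) k : ℝ)
        + (degSeq (insert {i, y} (G.erase {j, y})) k : ℝ) = 2 * (degSeq G k : ℝ) := by
      exact_mod_cast hk
    linarith
  have hv1d := hd.2 (subset_convexHull ℝ S hv1S) (subset_convexHull ℝ S hv2S) hseg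
  -- but degSeq G1 i < degSeq G i
  have hlt : degSeq (insert {j, x} (G.erase {i, x})) i < degSeq G i := by
    have h1 := e1 i
    simp only [Finset.mem_insert, Finset.mem_singleton] at h1
    rw [if_pos (Or.inl trivial), if_neg (by simp [hij', Ne.symm hxi])] at h1
    omega
  have := congrFun hv1d i
  rw [hdeg i] at this
  exact absurd (Nat.cast_injective this) (Nat.ne_of_lt hlt)
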